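/- If Q is a finite quandle whose enveloping group G_Q is isomorphic to ℤ × ℤ, then Q is isomorphic to U(n,m) for some coprime positive integers n and m. -/

import Mathlib

open Quandles

/-- The underlying set of the quandle `U(n,m)`: elements `x_i` (`i ∈ ZMod n`)
and `y_r` (`r ∈ ZMod m`). -/
def UQ (n m : ℕ) : Type := ZMod n ⊕ ZMod m

namespace UQ

/-- The quandle operation of `U(n,m)` (as the inverse action `z ◃⁻¹ w = w * z` of the paper):
`x_i * x_j = x_i`, `x_i * y_r = x_{i+1}`, `y_r * y_s = y_r`, `y_r * x_i = y_{r+1}`. -/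
def op {n m : ℕ} (x y : UQ n m) : UQ n m :=
  match x, y with
  | Sum.inl _, Sum.inl i => Sum.inl i
  | Sum.inl _, Sum.inr r => Sum.inr (r + 1)
  | Sum.inr _, Sum.inl i => Sum.inl (i + 1)
  | Sum.inr _, Sum.inr r => Sum.inr r

/-- The inverse operation. -/
def opInv {n m : ℕ} (x y : UQ n m) : UQ n m :=
  match x, y with
  | Sum.inl _, Sum.inl i => Sum.inl i
  | Sum.inl _, Sum.inr r => Sum.inr (r - 1)
  | Sum.inr _, Sum.inl i => Sum.inl (i - 1)
  | Sum.inr _, Sum.inr r => Sum.inr r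

instance quandle (n m : ℕ) : Quandle (UQ n m) where
  act := opInv
  invAct := op
  self_distrib := by
    rintro (a | a) (b | b) (c | c) <;> simp [op, opInv] <;> rfl
  left_inv := by
    rintro (a | a) (b | b) <;> simp [op, opInv] <;> rfl
  right_inv := by
    rintro (a | a) (b | b) <;> simp [op, opInv] <;> rfl
  fix := by
    rintro (a | a) <;> simp [op, opInv] <;> rfl

end UQ

section AuxLemmas

lemma zpow_fix' {α : Type*} (A : Equiv.Perm α) (x : α) (h : A x = x) : ∀ t : ℤ, (A ^ t) x = x := by
  have hinv : A⁻¹ x = x := by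
    apply A.injective; rw [Equiv.Perm.inv_def, Equiv.apply_symm_apply, h]
  intro t
  induction t using Int.induction_on with
  | zero => rfl
  | succ k ih => rw [add_comm, zpow_add, zpow_one, Equiv.Perm.mul_apply, ih, h]
  | pred k ih => rw [sub_eq_add_neg, add_comm, zpow_add, Equiv.Perm.mul_apply, ih, zpow_neg_one, hinv]

lemma mem_closure_pair_of_comm' {G : Type*} [Group G] (hcomm : ∀ x y : G, x * y = y * x)
    {x y g : G} (hg : g ∈ Subgroup.closure ({x, y} : Set G)) : ∃ i j : ℤ, g = x ^ i * y ^ j := by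
  have hc : ∀ (a b : G), a * b = b * a := hcomm
  induction hg using Subgroup.closure_induction with
  | mem z hz =>
    rcases hz with hz | hz
    · exact ⟨1, 0, by simp [hz]⟩
    · exact ⟨0, 1, by simp [Set.mem_singleton_iff.mp hz]⟩
  | one => exact ⟨0, 0, by simp⟩
  | mul a b _ _ iha ihb =>
    obtain ⟨i, j, rfl⟩ := iha
    obtain ⟨i', j', rfl⟩ := ihb
    refine ⟨i + i', j + j', ?_⟩
    rw [zpow_add, zpow_add]
    calc x ^ i * y ^ j * (x ^ i' * y ^ j')
        = x ^ i * (y ^ j * x ^ i') * y ^ j' := by simp [mul_assoc]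
      _ = x ^ i * (x ^ i' * y ^ j) * y ^ j' := by rw [hc (y ^ j) (x ^ i')]
      _ = x ^ i * x ^ i' * (y ^ j * y ^ j') := by simp [mul_assoc]
  | inv a _ iha =>
    obtain ⟨i, j, rfl⟩ := iha
    refine ⟨-i, -j, ?_⟩
    rw [mul_inv_rev, zpow_neg, zpow_neg, hc]

lemma exists_pos_pow_fix' {α : Type*} [Finite α] (A : Equiv.Perm α) (x : α) :
    ∃ p : ℕ, 0 < p ∧ (A ^ p) x = x := by
  obtain ⟨k, l, hkl, h⟩ := Finite.exists_ne_map_eq_of_infinite fun k : ℕ => (A ^ k) x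
  rcases Nat.lt_or_ge k l with hlt | hge
  · refine ⟨l - k, by omega, ?_⟩
    apply (A ^ k).injective
    rw [← Equiv.Perm.mul_apply, ← pow_add, Nat.add_sub_cancel' hlt.le]
    exact h.symm
  · have hlt : l < k := by omega
    refine ⟨k - l, by omega, ?_⟩
    apply (A ^ l).injective
    rw [← Equiv.Perm.mul_apply, ← pow_add, Nat.add_sub_cancel' hlt.le]
    exact h

lemma cyclic_param' {α : Type*} [Finite α] (A : Equiv.Perm α) (x : α) :
    ∃ n : ℕ, 0 < n ∧ ∃ φ : ZMod n → α,
      Function.Injective φ ∧ (∀ i, ∃ k : ℤ, (A ^ k) x = φ i) ∧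
      (∀ k : ℤ, ∃ i, φ i = (A ^ k) x) ∧
      (∀ i, A (φ i) = φ (i - 1)) ∧ φ 0 = x := by
  classical
  have hex := exists_pos_pow_fix' A x
  set n := Nat.find hex with hn_def
  obtain ⟨hn_pos, hn_fix⟩ := Nat.find_spec hex
  haveI : NeZero n := ⟨hn_pos.ne'⟩
  have hnz : (n : ℤ) ≠ 0 := by exact_mod_cast hn_pos.ne'
  have hP : ∀ k : ℤ, (A ^ k) x = x ↔ (n : ℤ) ∣ k := by
    intro k
    constructor
    · intro hk
      have hmod : (A ^ (k % (n : ℤ))) x = x := by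
        have h1 : (A ^ ((n : ℤ) * (k / (n : ℤ)))) x = x := by
          rw [zpow_mul, zpow_natCast]
          exact zpow_fix' _ _ hn_fix _
        have h2 : (A ^ (k % (n : ℤ) + (n : ℤ) * (k / (n : ℤ)))) x = (A ^ (k % (n : ℤ))) x := by
          rw [zpow_add, Equiv.Perm.mul_apply, h1]
        rw [← h2, add_comm, Int.mul_ediv_add_emod]
        exact hk
      set r : ℕ := (k % (n : ℤ)).toNat with hr_def
      have hr_nonneg : 0 ≤ k % (n : ℤ) := Int.emod_nonneg k hnz
      have hr_lt : k % (n : ℤ) < (n : ℤ) := Int.emod_lt_of_pos k (by exact_mod_cast hn_pos)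
      have hr_cast : (r : ℤ) = k % (n : ℤ) := Int.toNat_of_nonneg hr_nonneg
      have hrn : r < n := by omega
      have hfixr : (A ^ r) x = x := by
        rw [← zpow_natCast, hr_cast]; exact hmod
      have hr0 : r = 0 := by
        by_contra hr0
        exact Nat.find_min hex hrn ⟨Nat.pos_of_ne_zero hr0, hfixr⟩
      have : k % (n : ℤ) = 0 := by omega
      exact Int.dvd_of_emod_eq_zero this
    · rintro ⟨t, rfl⟩
      rw [zpow_mul, zpow_natCast]
      exact zpow_fix' _ _ hn_fix _
  have hP' : ∀ k l : ℤ, (A ^ k) x = (A ^ l) x ↔ (n : ℤ) ∣ k - l := by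
    intro k l
    rw [← hP (k - l)]
    constructor
    · intro h
      apply (A ^ l).injective
      rw [← Equiv.Perm.mul_apply, ← zpow_add, add_sub_cancel]
      exact h
    · intro h
      conv_lhs => rw [show k = l + (k - l) by ring]
      rw [zpow_add, Equiv.Perm.mul_apply, h]
  have hvalN : ∀ i : ZMod n, ((i.val : ℕ) : ZMod n) = i := by
    intro i
    rw [ZMod.natCast_val, ZMod.cast_id]
  refine ⟨n, hn_pos, fun i => (A ^ (-(i.val : ℤ))) x, ?_, ?_, ?_, ?_, ?_⟩
  · intro i j hij
    have := (hP' _ _).mp hij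
    have hz := (ZMod.intCast_zmod_eq_zero_iff_dvd ((j.val : ℤ) - (i.val : ℤ)) n).mpr
      (by rw [show (j.val : ℤ) - (i.val : ℤ) = -(i.val : ℤ) - -(j.val : ℤ) by ring]; exact this)
    push_cast at hz
    rw [hvalN, hvalN, sub_eq_zero] at hz
    exact hz.symm
  · intro i; exact ⟨-(i.val : ℤ), rfl⟩
  · intro k
    refine ⟨((-k : ℤ) : ZMod n), ?_⟩
    rw [hP', ← ZMod.intCast_zmod_eq_zero_iff_dvd]
    push_cast
    rw [hvalN]
    ring
  · intro i
    have : A ((A ^ (-(i.val : ℤ))) x) = (A ^ (1 + -(i.val : ℤ))) x := by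
      rw [zpow_add, zpow_one, Equiv.Perm.mul_apply]
    rw [this, hP', ← ZMod.intCast_zmod_eq_zero_iff_dvd]
    push_cast
    rw [hvalN, hvalN]
    ring
  · simp

lemma closure_range_toEnvelGroup' (Q : Type*) [Rack Q] :
    Subgroup.closure (Set.range fun q : Q => (Rack.toEnvelGroup Q q : Rack.EnvelGroup Q)) = ⊤ := by
  rw [eq_top_iff]
  rintro g -
  refine Quotient.inductionOn g ?_
  intro w
  induction w with
  | unit => exact Subgroup.one_mem _
  | incl x => exact Subgroup.subset_closure ⟨x, rfl⟩
  | mul a b iha ihb => exact Subgroup.mul_mem _ iha ihb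
  | inv a iha => exact Subgroup.inv_mem _ iha

end AuxLemmas

/-- Heisenberg group over `ZMod d`. -/
def Heis (d : ℕ) : Type := ZMod d × ZMod d × ZMod d

namespace Heis
variable {d : ℕ}

instance : Mul (Heis d) := ⟨fun x y => (x.1 + y.1, x.2.1 + y.2.1, x.2.2 + y.2.2 + x.1 * y.2.1)⟩
instance : One (Heis d) := ⟨((0 : ZMod d), (0 : ZMod d), (0 : ZMod d))⟩
instance : Inv (Heis d) := ⟨fun x => (-x.1, -x.2.1, -x.2.2 + x.1 * x.2.1)⟩

theorem mul_def (x y : Heis d) :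
    x * y = (x.1 + y.1, x.2.1 + y.2.1, x.2.2 + y.2.2 + x.1 * y.2.1) := rfl
theorem inv_def (x : Heis d) : x⁻¹ = (-x.1, -x.2.1, -x.2.2 + x.1 * x.2.1) := rfl
theorem one_def : (1 : Heis d) = ((0 : ZMod d), (0 : ZMod d), (0 : ZMod d)) := rfl

instance : Group (Heis d) :=
  Group.ofLeftAxioms
    (fun a b c => by
      simp only [mul_def]
      refine Prod.ext ?_ (Prod.ext ?_ ?_) <;> (repeat' erw [mul_def]) <;> ring)
    (fun a => by
      simp only [mul_def, one_def]
      refine Prod.ext ?_ (Prod.ext ?_ ?_) <;> (repeat' erw [mul_def]) <;> ring)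
    (fun a => by
      simp only [mul_def, inv_def, one_def]
      refine Prod.ext ?_ (Prod.ext ?_ ?_) <;> (repeat' erw [mul_def]) <;> ring)

end Heis


/-- If `Q` is a finite quandle whose enveloping group is isomorphic to `ℤ × ℤ`, then
`Q` is isomorphic (as a quandle) to `U(n,m)` for some coprime positive integers `n, m`. -/
theorem finite_quandle_envelGroup_ZxZ (Q : Type) [Quandle Q] [Finite Q]
    (h : Nonempty (Rack.EnvelGroup Q ≃* Multiplicative (ℤ × ℤ))) :
    ∃ n m : ℕ, 0 < n ∧ 0 < m ∧ Nat.Coprime n m ∧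
      ∃ f : Q ≃ UQ n m, ∀ a b : Q, f (Shelf.act a b) = Shelf.act (f a) (f b) := by
  classical
  obtain ⟨F⟩ := h
  set G := Rack.EnvelGroup Q with hG_def
  let e : Q → G := fun q => Rack.toEnvelGroup Q q
  let T : G →* Equiv.Perm Q := Rack.envelAction
  have hTe : ∀ q c : Q, T (e q) c = Shelf.act q c := fun q c => Rack.envelAction_prop q c
  have hcomm : ∀ x y : G, x * y = y * x := by
    intro x y
    apply F.injective
    rw [map_mul, map_mul, mul_comm]
  have hclosure : Subgroup.closure (Set.range e) = ⊤ := closure_range_toEnvelGroup' Q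
  have he_act : ∀ a b : Q, e (Shelf.act a b) = e b := by
    intro a b
    have h1 : e (Shelf.act a b) = e a * e b * (e a)⁻¹ := ShelfHom.map_act _
    rw [h1, hcomm (e a) (e b), mul_assoc, mul_inv_cancel, mul_one]
  have he_T : ∀ g : G, ∀ c : Q, e (T g c) = e c := by
    intro g
    have hg : g ∈ Subgroup.closure (Set.range e) := hclosure ▸ Subgroup.mem_top g
    induction hg using Subgroup.closure_induction with
    | mem z hz =>
      obtain ⟨q, rfl⟩ := hz
      intro c
      rw [hTe q c, he_act]
    | one => intro c; simp
    | mul a b _ _ iha ihb =>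
      intro c
      rw [map_mul, Equiv.Perm.mul_apply, iha, ihb]
    | inv a _ iha =>
      intro c
      have hac : T a (T a⁻¹ c) = c := by rw [map_inv, Equiv.Perm.inv_def, Equiv.apply_symm_apply]
      calc e (T a⁻¹ c) = e (T a (T a⁻¹ c)) := (iha _).symm
        _ = e c := by rw [hac]
  -- orbit relation
  let r : Q → Q → Prop := fun a b => ∃ g : G, T g a = b
  have hr_refl : ∀ a, r a a := fun a => ⟨1, by simp⟩
  have hr_symm : ∀ {a b}, r a b → r b a := by
    rintro a b ⟨g, rfl⟩
    exact ⟨g⁻¹, by rw [map_inv, Equiv.Perm.inv_def, Equiv.symm_apply_apply]⟩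
  have hr_trans : ∀ {a b c}, r a b → r b c → r a c := by
    rintro a b c ⟨g, rfl⟩ ⟨g', rfl⟩
    exact ⟨g' * g, by rw [map_mul, Equiv.Perm.mul_apply]⟩
  have hr_e : ∀ {a b}, r a b → e a = e b := by
    rintro a b ⟨g, rfl⟩
    exact (he_T g a).symm
  have hr_act : ∀ c x y : Q, r c (Shelf.act x y) ↔ r c y := by
    intro c x y
    have hxy : r y (Shelf.act x y) := ⟨e x, hTe x y⟩
    exact ⟨fun h => hr_trans h (hr_symm hxy), fun h => hr_trans h hxy⟩
  -- Q is nonempty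
  have hQne : Nonempty Q := by
    by_contra hQ
    rw [not_nonempty_iff] at hQ
    have hrange : Set.range e = ∅ := Set.range_eq_empty e
    rw [hrange, Subgroup.closure_empty] at hclosure
    have h1 : (F.symm (Multiplicative.ofAdd ((0 : ℤ), (1 : ℤ)))) = 1 := by
      have := hclosure ▸ Subgroup.mem_top (F.symm (Multiplicative.ofAdd ((0 : ℤ), (1 : ℤ))))
      simpa [Subgroup.mem_bot] using this
    have h2 := congrArg F h1
    rw [MulEquiv.apply_symm_apply, map_one] at h2
    have h3 := congrArg Multiplicative.toAdd h2
    simp [Prod.ext_iff] at h3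
  -- G is not cyclic
  have not_cyclic : ∀ g0 : G, ¬ (∀ g : G, ∃ i : ℤ, g = g0 ^ i) := by
    intro g0 hcyc
    obtain ⟨i, hi⟩ := hcyc (F.symm (Multiplicative.ofAdd ((1 : ℤ), (0 : ℤ))))
    obtain ⟨j, hj⟩ := hcyc (F.symm (Multiplicative.ofAdd ((0 : ℤ), (1 : ℤ))))
    set p : ℤ := (Multiplicative.toAdd (F g0)).1 with hp_def
    set q : ℤ := (Multiplicative.toAdd (F g0)).2 with hq_def
    have hi' : ((1 : ℤ), (0 : ℤ)) = (i * p, i * q) := by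
      have := congrArg F hi
      rw [MulEquiv.apply_symm_apply, map_zpow] at this
      have h2 := congrArg Multiplicative.toAdd this
      rw [toAdd_zpow] at h2
      rw [show ((1 : ℤ), (0 : ℤ)) = Multiplicative.toAdd (Multiplicative.ofAdd ((1 : ℤ), (0 : ℤ))) from rfl, h2, Prod.smul_def, smul_eq_mul, smul_eq_mul]
    have hj' : ((0 : ℤ), (1 : ℤ)) = (j * p, j * q) := by
      have := congrArg F hj
      rw [MulEquiv.apply_symm_apply, map_zpow] at this
      have h2 := congrArg Multiplicative.toAdd this
      rw [toAdd_zpow] at h2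
      rw [show ((0 : ℤ), (1 : ℤ)) = Multiplicative.toAdd (Multiplicative.ofAdd ((0 : ℤ), (1 : ℤ))) from rfl, h2, Prod.smul_def, smul_eq_mul, smul_eq_mul]
    rw [Prod.ext_iff] at hi' hj'
    obtain ⟨hi1, hi2⟩ := hi'
    obtain ⟨hj1, hj2⟩ := hj'
    dsimp at hi1 hi2 hj1 hj2
    have hp0 : p ≠ 0 := by
      intro h0
      rw [h0, mul_zero] at hi1
      exact one_ne_zero hi1
    have hj0 : j = 0 := by
      rcases mul_eq_zero.mp hj1.symm with h | h
      · exact h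
      · exact absurd h hp0
    rw [hj0, zero_mul] at hj2
    exact one_ne_zero hj2
  obtain ⟨a0⟩ := hQne
  -- there are at least two orbits
  by_cases hone : ∀ q : Q, r a0 q
  case pos =>
    exfalso
    apply not_cyclic (e a0)
    intro g
    have hsub : Set.range e ⊆ {e a0} := by
      rintro _ ⟨q, rfl⟩
      exact (hr_e (hone q)).symm
    have hg : g ∈ Subgroup.closure ({e a0} : Set G) := by
      have : (⊤ : Subgroup G) ≤ Subgroup.closure {e a0} := by
        rw [← hclosure]
        exact Subgroup.closure_mono hsub
      exact this (Subgroup.mem_top g)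
    obtain ⟨i, hi⟩ := Subgroup.mem_closure_singleton.mp hg
    exact ⟨i, hi.symm⟩
  case neg =>
  push_neg at hone
  obtain ⟨b0, hb0⟩ := hone
  -- there are at most two orbits
  have hcover : ∀ q : Q, r a0 q ∨ r b0 q := by
    by_contra hcon
    push_neg at hcon
    obtain ⟨q0, hq1, hq2⟩ := hcon
    have hab : ¬ r b0 a0 := fun h => hb0 (hr_symm h)
    have hqa : ¬ r q0 a0 := fun h => hq1 (hr_symm h)
    have hqb : ¬ r q0 b0 := fun h => hq2 (hr_symm h)
    -- indicator map into (ZMod 2)³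
    let ind : Q → ZMod 2 × ZMod 2 × ZMod 2 := fun q =>
      (if r a0 q then 1 else 0, if r b0 q then 1 else 0, if r q0 q then 1 else 0)
    have hind_act : ∀ x y : Q, ind (Shelf.act x y) = ind y := by
      intro x y
      simp only [ind]
      rw [if_congr (hr_act a0 x y) rfl rfl, if_congr (hr_act b0 x y) rfl rfl,
        if_congr (hr_act q0 x y) rfl rfl]
    let V := Multiplicative (ZMod 2 × ZMod 2 × ZMod 2)
    let χ : Q →◃ Quandle.Conj V :=
      { toFun := fun q => Multiplicative.ofAdd (ind q)
        map_act' := by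
          intro x y
          show Multiplicative.ofAdd (ind (Shelf.act x y)) = _ * _ * _⁻¹
          rw [hind_act, mul_comm (Multiplicative.ofAdd (ind x)), mul_assoc,
            mul_inv_cancel, mul_one] }
    let Φ : G →* V := Rack.toEnvelGroup.map χ
    have hΦe : ∀ q : Q, Φ (e q) = Multiplicative.ofAdd (ind q) := fun q => rfl
    have hV2 : ∀ v : V, v * v = 1 := by decide
    have hpow : ∀ (u : V) (a : ℤ), u ^ a = 1 ∨ u ^ a = u := by
      intro u a
      rcases Int.even_or_odd a with ⟨k, hk⟩ | ⟨k, hk⟩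
      · left
        rw [hk, zpow_add]
        exact hV2 _
      · right
        rw [hk, zpow_add, zpow_one, two_mul, zpow_add, hV2, one_mul]
    set U : V := Φ (F.symm (Multiplicative.ofAdd ((1 : ℤ), (0 : ℤ)))) with hU_def
    set W : V := Φ (F.symm (Multiplicative.ofAdd ((0 : ℤ), (1 : ℤ)))) with hW_def
    have hrangeΦ : ∀ g : G, Φ g ∈ ({1, U, W, U * W} : Finset V) := by
      intro g
      have hgd : g = F.symm (Multiplicative.ofAdd ((1 : ℤ), (0 : ℤ))) ^ (Multiplicative.toAdd (F g)).1
          * F.symm (Multiplicative.ofAdd ((0 : ℤ), (1 : ℤ))) ^ (Multiplicative.toAdd (F g)).2 := by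
        apply F.injective
        rw [map_mul, map_zpow, map_zpow, MulEquiv.apply_symm_apply, MulEquiv.apply_symm_apply,
          ← ofAdd_zsmul, ← ofAdd_zsmul, ← ofAdd_add]
        conv_lhs => rw [← ofAdd_toAdd (F g)]
        congr 1
        refine Prod.ext ?_ ?_ <;> simp
      rw [hgd, map_mul, map_zpow, map_zpow, ← hU_def, ← hW_def]
      rcases hpow U (Multiplicative.toAdd (F g)).1 with h1 | h1 <;>
        rcases hpow W (Multiplicative.toAdd (F g)).2 with h2 | h2 <;>
        rw [h1, h2] <;> simp [Finset.mem_insert]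
    -- each of the 8 elements is in the range of Φ
    have hval2 : ∀ c : ZMod 2, ((c.val : ℕ) : ZMod 2) = c := by decide
    have hmem : ∀ t : ZMod 2 × ZMod 2 × ZMod 2,
        (Multiplicative.ofAdd t) ∈ ({1, U, W, U * W} : Finset V) := by
      intro t
      have hinda : ind a0 = (1, 0, 0) := by
        simp only [ind, if_pos (hr_refl a0), if_neg hab, if_neg hqa]
      have hindb : ind b0 = (0, 1, 0) := by
        simp only [ind, if_pos (hr_refl b0), if_neg hb0, if_neg hqb]
      have hindq : ind q0 = (0, 0, 1) := by
        simp only [ind, if_pos (hr_refl q0), if_neg hq1, if_neg hq2]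
      have key : Φ (e a0 ^ (t.1.val : ℕ) * e b0 ^ (t.2.1.val : ℕ) * e q0 ^ (t.2.2.val : ℕ))
          = Multiplicative.ofAdd t := by
        rw [map_mul, map_mul, map_pow, map_pow, map_pow, hΦe, hΦe, hΦe,
          hinda, hindb, hindq, ← ofAdd_nsmul, ← ofAdd_nsmul, ← ofAdd_nsmul,
          ← ofAdd_add, ← ofAdd_add]
        congr 1
        refine Prod.ext ?_ (Prod.ext ?_ ?_) <;>
          simp [Prod.smul_def, hval2]
      rw [← key]
      exact hrangeΦ _
    have hcard : Fintype.card (ZMod 2 × ZMod 2 × ZMod 2) ≤ ({1, U, W, U * W} : Finset V).card := by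
      rw [← Finset.card_univ]
      apply Finset.card_le_card_of_injOn (fun t => Multiplicative.ofAdd t)
      · intro t _
        exact hmem t
      · intro x _ y _ hxy
        exact hxy
    have h8 : Fintype.card (ZMod 2 × ZMod 2 × ZMod 2) = 8 := by decide
    have h4 : ({1, U, W, U * W} : Finset V).card ≤ 4 := by
      apply le_trans (Finset.card_insert_le _ _)
      have : ({U, W, U * W} : Finset V).card ≤ 3 := by
        apply le_trans (Finset.card_insert_le _ _)
        have : ({W, U * W} : Finset V).card ≤ 2 := by
          apply le_trans (Finset.card_insert_le _ _)
          simp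
        omega
      omega
    omega
  -- decomposition of group elements
  have pair_decomp : ∀ g : G, ∃ i j : ℤ, g = (e a0) ^ i * (e b0) ^ j := by
    intro g
    apply mem_closure_pair_of_comm' hcomm
    have hsub : Set.range e ⊆ {e a0, e b0} := by
      rintro _ ⟨q, rfl⟩
      rcases hcover q with hq | hq
      · exact Set.mem_insert_iff.mpr (Or.inl (hr_e hq).symm)
      · exact Set.mem_insert_iff.mpr (Or.inr (hr_e hq).symm)
    have hle : (⊤ : Subgroup G) ≤ Subgroup.closure {e a0, e b0} := by
      rw [← hclosure]
      exact Subgroup.closure_mono hsub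
    exact hle (Subgroup.mem_top g)
  set σ : Equiv.Perm Q := T (e b0) with hσ_def
  set τ : Equiv.Perm Q := T (e a0) with hτ_def
  have hτ_fixA : ∀ q, r a0 q → τ q = q := by
    intro q hq
    have hq' : e q = e a0 := (hr_e hq).symm
    show T (e a0) q = q
    rw [← hq', hTe]
    exact Quandle.fix
  have hσ_fixB : ∀ q, r b0 q → σ q = q := by
    intro q hq
    have hq' : e q = e b0 := (hr_e hq).symm
    show T (e b0) q = q
    rw [← hq', hTe]
    exact Quandle.fix
  have hσk_orbA : ∀ k : ℤ, r a0 ((σ ^ k) a0) := fun k => ⟨(e b0) ^ k, by rw [map_zpow]⟩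
  have hτk_orbB : ∀ k : ℤ, r b0 ((τ ^ k) b0) := fun k => ⟨(e a0) ^ k, by rw [map_zpow]⟩
  have horbA : ∀ q, r a0 q → ∃ k : ℤ, (σ ^ k) a0 = q := by
    rintro q ⟨g, rfl⟩
    obtain ⟨i, j, rfl⟩ := pair_decomp g
    refine ⟨j, ?_⟩
    rw [map_mul, map_zpow, map_zpow, Equiv.Perm.mul_apply, ← hτ_def, ← hσ_def]
    exact (zpow_fix' τ _ (hτ_fixA _ (hσk_orbA j)) i).symm
  have horbB : ∀ q, r b0 q → ∃ k : ℤ, (τ ^ k) b0 = q := by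
    rintro q ⟨g, rfl⟩
    obtain ⟨i, j, rfl⟩ := pair_decomp g
    refine ⟨i, ?_⟩
    rw [map_mul, map_zpow, map_zpow, Equiv.Perm.mul_apply, ← hτ_def, ← hσ_def]
    rw [zpow_fix' σ _ (hσ_fixB b0 (hr_refl b0)) j]
  -- cyclic parametrization of the two orbits
  obtain ⟨n, hn_pos, φA, hφA_inj, hφA_mem, hφA_sur, hφA_shift, hφA_zero⟩ := cyclic_param' σ a0
  obtain ⟨m, hm_pos, φB, hφB_inj, hφB_mem, hφB_sur, hφB_shift, hφB_zero⟩ := cyclic_param' τ b0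
  have hφA_orb : ∀ i, r a0 (φA i) := by
    intro i
    obtain ⟨k, hk⟩ := hφA_mem i
    rw [← hk]
    exact hσk_orbA k
  have hφB_orb : ∀ t, r b0 (φB t) := by
    intro t
    obtain ⟨k, hk⟩ := hφB_mem t
    rw [← hk]
    exact hτk_orbB k
  have hφA_sur' : ∀ q, r a0 q → ∃ i, φA i = q := by
    intro q hq
    obtain ⟨k, hk⟩ := horbA q hq
    obtain ⟨i, hi⟩ := hφA_sur k
    exact ⟨i, by rw [hi, hk]⟩
  have hφB_sur' : ∀ q, r b0 q → ∃ t, φB t = q := by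
    intro q hq
    obtain ⟨k, hk⟩ := horbB q hq
    obtain ⟨t, ht⟩ := hφB_sur k
    exact ⟨t, by rw [ht, hk]⟩
  -- the bijection
  let invF : UQ n m → Q := Sum.elim φA φB
  have hAB_disj : ∀ i t, φA i ≠ φB t := by
    intro i t hcon
    apply hb0
    have h1 : r a0 (φB t) := hcon ▸ hφA_orb i
    exact hr_trans h1 (hr_symm (hφB_orb t))
  have hbij : Function.Bijective invF := by
    constructor
    · rintro (i | s) (j | t) h
      · exact congrArg Sum.inl (hφA_inj h)
      · exact absurd h (hAB_disj i t)
      · exact absurd h.symm (hAB_disj j s)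
      · exact congrArg Sum.inr (hφB_inj h)
    · intro q
      rcases hcover q with hq | hq
      · obtain ⟨i, hi⟩ := hφA_sur' q hq
        exact ⟨Sum.inl i, hi⟩
      · obtain ⟨t, ht⟩ := hφB_sur' q hq
        exact ⟨Sum.inr t, ht⟩
  -- action computations
  have hactA : ∀ (q c : Q), r a0 q → Shelf.act q c = τ c := by
    intro q c hq
    rw [← hTe q c, hτ_def, hr_e hq]
  have hactB : ∀ (q c : Q), r b0 q → Shelf.act q c = σ c := by
    intro q c hq
    rw [← hTe q c, hσ_def, hr_e hq]
  have hhom : ∀ u v : UQ n m, invF (Shelf.act u v) = Shelf.act (invF u) (invF v) := by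
    rintro (i | s) (j | t)
    · show φA j = Shelf.act (φA i) (φA j)
      rw [hactA _ _ (hφA_orb i), hτ_fixA _ (hφA_orb j)]
    · show φB (t - 1) = Shelf.act (φA i) (φB t)
      rw [hactA _ _ (hφA_orb i), hφB_shift]
    · show φA (j - 1) = Shelf.act (φB s) (φA j)
      rw [hactB _ _ (hφB_orb s), hφA_shift]
    · show φB t = Shelf.act (φB s) (φB t)
      rw [hactB _ _ (hφB_orb s), hσ_fixB _ (hφB_orb t)]
  let fE : UQ n m ≃ Q := Equiv.ofBijective invF hbij
  let f : Q ≃ UQ n m := fE.symm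
  have hfE : ∀ u, fE u = invF u := fun u => rfl
  have hinvf : ∀ a : Q, invF (f a) = a := fun a => fE.apply_symm_apply a
  have hf_hom : ∀ a b : Q, f (Shelf.act a b) = Shelf.act (f a) (f b) := by
    intro a b
    apply fE.injective
    rw [Equiv.apply_symm_apply, hfE, hhom, hinvf, hinvf]
  -- coprimality via the Heisenberg group
  set d : ℕ := Nat.gcd n m with hd_def
  have hd_pos : 0 < d := Nat.gcd_pos_of_pos_left m hn_pos
  haveI : NeZero d := ⟨hd_pos.ne'⟩
  let cA : ZMod n →+* ZMod d := ZMod.castHom (Nat.gcd_dvd_left n m) (ZMod d)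
  let cB : ZMod m →+* ZMod d := ZMod.castHom (Nat.gcd_dvd_right n m) (ZMod d)
  let hfun : UQ n m → Heis d :=
    Sum.elim (fun i => ((1 : ZMod d), (0 : ZMod d), cA i))
      (fun t => ((0 : ZMod d), (1 : ZMod d), -cB t))
  have hfun_conj : ∀ u v : UQ n m,
      hfun (Shelf.act u v) = hfun u * hfun v * (hfun u)⁻¹ := by
    rintro (i | s) (j | t)
    · show ((1 : ZMod d), (0 : ZMod d), cA j) = _
      simp only [hfun, Sum.elim_inl, Heis.mul_def, Heis.inv_def]
      refine Prod.ext ?_ (Prod.ext ?_ ?_) <;> (repeat' erw [Heis.inv_def]) <;> (repeat' erw [Heis.mul_def]) <;> dsimp only [Sum.elim] <;> ring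
    · show ((0 : ZMod d), (1 : ZMod d), -cB (t - 1)) = _
      simp only [hfun, Sum.elim_inl, Sum.elim_inr, Heis.mul_def, Heis.inv_def, map_sub, map_one]
      refine Prod.ext ?_ (Prod.ext ?_ ?_) <;> (repeat' erw [Heis.inv_def]) <;> (repeat' erw [Heis.mul_def]) <;> dsimp only [Sum.elim] <;> ring
    · show ((1 : ZMod d), (0 : ZMod d), cA (j - 1)) = _
      simp only [hfun, Sum.elim_inl, Sum.elim_inr, Heis.mul_def, Heis.inv_def, map_sub, map_one]
      refine Prod.ext ?_ (Prod.ext ?_ ?_) <;> (repeat' erw [Heis.inv_def]) <;> (repeat' erw [Heis.mul_def]) <;> dsimp only [Sum.elim] <;> ring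
    · show ((0 : ZMod d), (1 : ZMod d), -cB t) = _
      simp only [hfun, Sum.elim_inr, Heis.mul_def, Heis.inv_def]
      refine Prod.ext ?_ (Prod.ext ?_ ?_) <;> (repeat' erw [Heis.inv_def]) <;> (repeat' erw [Heis.mul_def]) <;> dsimp only [Sum.elim] <;> ring
  let χh : Q →◃ Quandle.Conj (Heis d) :=
    { toFun := fun q => hfun (f q)
      map_act' := by
        intro x y
        show hfun (f (Shelf.act x y)) = hfun (f x) * hfun (f y) * (hfun (f x))⁻¹
        rw [hf_hom, hfun_conj] }
  let Φh : G →* Heis d := Rack.toEnvelGroup.map χh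
  have hΦh : ∀ q : Q, Φh (e q) = hfun (f q) := fun q => rfl
  have hfa0 : f a0 = Sum.inl (0 : ZMod n) := by
    apply fE.injective
    rw [Equiv.apply_symm_apply]
    exact (hφA_zero).symm
  have hfb0 : f b0 = Sum.inr (0 : ZMod m) := by
    apply fE.injective
    rw [Equiv.apply_symm_apply]
    exact (hφB_zero).symm
  have hcomm' : Φh (e a0) * Φh (e b0) = Φh (e b0) * Φh (e a0) := by
    rw [← map_mul Φh (e a0) (e b0), ← map_mul Φh (e b0) (e a0), hcomm]
  rw [hΦh, hΦh, hfa0, hfb0] at hcomm'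
  have hval : hfun (Sum.inl (0 : ZMod n)) = ((1 : ZMod d), (0 : ZMod d), (0 : ZMod d)) := by
    show ((1 : ZMod d), (0 : ZMod d), cA 0) = _; rw [map_zero]
  have hval' : hfun (Sum.inr (0 : ZMod m)) = ((0 : ZMod d), (1 : ZMod d), (0 : ZMod d)) := by
    show ((0 : ZMod d), (1 : ZMod d), -cB 0) = _; rw [map_zero, neg_zero]
  rw [hval, hval'] at hcomm'
  have hthird := congrArg (fun z : Heis d => z.2.2) hcomm'
  change (0 : ZMod d) + 0 + 1 * 1 = 0 + 0 + 0 * 0 at hthird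
  have h10 : (1 : ZMod d) = 0 := by
    rw [show ((1 : ZMod d)) = 0 + 0 + 1 * 1 by ring, hthird]
    ring
  have hd1 : d = 1 := by
    have : ((1 : ℕ) : ZMod d) = 0 := by exact_mod_cast h10
    exact Nat.dvd_one.mp ((ZMod.natCast_eq_zero_iff 1 d).mp this)
  exact ⟨n, m, hn_pos, hm_pos, hd1, f, hf_hom⟩
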